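/- Let d, n be positive integers and let L̄, μ be reals with 0 < μ and μ√n ≤ L̄. Set c = L̄/(4√n) and define G_x(x, y) = c·A₁ y + (μ/3)x and G_y(x, y) = c·A₁ᵀ x − (μ/3)y + (L̄²/(2nμ)) e₁ for x, y ∈ ℝ^d. Then for all x₁, x₂, y₁, y₂ ∈ ℝ^d: ‖G_x(x₁, y₁) − G_x(x₂, y₂)‖² + ‖G_y(x₁, y₁) − G_y(x₂, y₂)‖² ≤ (L̄²/n)(‖x₁ − x₂‖² + ‖y₁ − y₂‖²). -/

import Mathlib

/-- The matrix `A₁` of the lower-bound construction (1 on the diagonal, `−2` on the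
superdiagonal in the rows with even 1-based index, i.e. odd 0-based index). -/
def lowerA1 (d : ℕ) : Matrix (Fin d) (Fin d) ℝ := fun i j =>
  if i = j then 1 else if j.val = i.val + 1 ∧ i.val % 2 = 1 then -2 else 0

noncomputable def shiftS {d : ℕ} (v : Fin d → ℝ) (i : Fin d) : ℝ :=
  if h : i.val + 1 < d ∧ i.val % 2 = 1 then v ⟨i.val + 1, h.1⟩ else 0

noncomputable def shiftT {d : ℕ} (u : Fin d → ℝ) (j : Fin d) : ℝ :=
  if h : 0 < j.val ∧ j.val % 2 = 0 then u ⟨j.val - 1, by omega⟩ else 0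

lemma mulVec_lowerA1 {d : ℕ} (v : Fin d → ℝ) (i : Fin d) :
    (lowerA1 d).mulVec v i = v i - 2 * shiftS v i := by
  unfold shiftS
  rw [Matrix.mulVec, dotProduct]
  by_cases h : i.val + 1 < d ∧ i.val % 2 = 1
  · rw [dif_pos h]
    have key : ∀ j : Fin d, lowerA1 d i j * v j =
        (if j = i then v i else 0) + (if j = (⟨i.val + 1, h.1⟩ : Fin d) then -2 * v j else 0) := by
      intro j
      unfold lowerA1
      split_ifs <;>
        first
          | ring1
          | (subst_vars; ring1)
          | (exfalso; simp only [Fin.ext_iff, Fin.val_mk] at *; omega)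
    rw [Finset.sum_congr rfl (fun j _ => key j), Finset.sum_add_distrib,
      Finset.sum_ite_eq' Finset.univ i (fun _ => v i),
      Finset.sum_ite_eq' Finset.univ (⟨i.val + 1, h.1⟩ : Fin d) (fun j => -2 * v j)]
    simp only [Finset.mem_univ, if_pos]
    ring
  · rw [dif_neg h]
    have key : ∀ j : Fin d, lowerA1 d i j * v j = (if j = i then v i else 0) := by
      intro j
      unfold lowerA1
      split_ifs <;>
        first
          | ring1
          | (subst_vars; ring1)
          | (exfalso; simp only [Fin.ext_iff, Fin.val_mk, not_and] at *; omega)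
    rw [Finset.sum_congr rfl (fun j _ => key j),
      Finset.sum_ite_eq' Finset.univ i (fun _ => v i)]
    simp

lemma mulVec_lowerA1T {d : ℕ} (u : Fin d → ℝ) (j : Fin d) :
    (lowerA1 d).transpose.mulVec u j = u j - 2 * shiftT u j := by
  unfold shiftT
  rw [Matrix.mulVec, dotProduct]
  by_cases h : 0 < j.val ∧ j.val % 2 = 0
  · rw [dif_pos h]
    have key : ∀ i : Fin d, (lowerA1 d).transpose j i * u i =
        (if i = j then u j else 0) +
          (if i = (⟨j.val - 1, by omega⟩ : Fin d) then -2 * u i else 0) := by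
      intro i
      unfold lowerA1
      change (if i = j then (1:ℝ) else if (j:ℕ) = (i:ℕ) + 1 ∧ (i:ℕ) % 2 = 1 then -2 else 0) * u i = _
      split_ifs <;>
        first
          | ring1
          | (subst_vars; ring1)
          | (exfalso; simp only [Fin.ext_iff, Fin.val_mk] at *; omega)
    rw [Finset.sum_congr rfl (fun i _ => key i), Finset.sum_add_distrib,
      Finset.sum_ite_eq' Finset.univ j (fun _ => u j),
      Finset.sum_ite_eq' Finset.univ (⟨j.val - 1, by omega⟩ : Fin d) (fun i => -2 * u i)]
    simp only [Finset.mem_univ, if_pos]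
    ring
  · rw [dif_neg h]
    have key : ∀ i : Fin d, (lowerA1 d).transpose j i * u i = (if i = j then u j else 0) := by
      intro i
      unfold lowerA1
      change (if i = j then (1:ℝ) else if (j:ℕ) = (i:ℕ) + 1 ∧ (i:ℕ) % 2 = 1 then -2 else 0) * u i = _
      split_ifs <;>
        first
          | ring1
          | (subst_vars; ring1)
          | (exfalso; simp only [Fin.ext_iff, Fin.val_mk, not_and] at *; omega)
    rw [Finset.sum_congr rfl (fun i _ => key i),
      Finset.sum_ite_eq' Finset.univ j (fun _ => u j)]
    simp

lemma shiftS_sq_le {d : ℕ} (v : Fin d → ℝ) :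
    ∑ i, (shiftS v i) ^ 2 ≤ ∑ i, (v i) ^ 2 := by
  classical
  have h1 : ∑ i, (shiftS v i) ^ 2 =
      ∑ i ∈ Finset.univ.filter (fun i : Fin d => i.val + 1 < d ∧ i.val % 2 = 1),
        (shiftS v i) ^ 2 := by
    rw [Finset.sum_filter]
    apply Finset.sum_congr rfl
    intro i _
    by_cases h : i.val + 1 < d ∧ i.val % 2 = 1
    · rw [if_pos h]
    · rw [if_neg h]; unfold shiftS; rw [dif_neg h]; ring
  rw [h1]
  set S := Finset.univ.filter (fun i : Fin d => i.val + 1 < d ∧ i.val % 2 = 1) with hS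
  have key : ∑ i ∈ S, (shiftS v i) ^ 2 =
      ∑ j ∈ S.image (fun i : Fin d =>
          if h : i.val + 1 < d then (⟨i.val + 1, h⟩ : Fin d) else i), (v j) ^ 2 := by
    rw [Finset.sum_image]
    · apply Finset.sum_congr rfl
      intro i hi
      simp only [hS, Finset.mem_filter] at hi
      rw [dif_pos hi.2.1]
      unfold shiftS
      rw [dif_pos hi.2]
    · intro a ha b hb hab
      simp only [Finset.mem_coe, hS, Finset.mem_filter] at ha hb
      beta_reduce at hab; rw [dif_pos ha.2.1, dif_pos hb.2.1] at hab
      simp only [Fin.ext_iff, Fin.val_mk] at hab ⊢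
      omega
  rw [key]
  apply Finset.sum_le_sum_of_subset_of_nonneg (Finset.subset_univ _)
  intro j _ _; positivity

lemma shiftT_sq_le {d : ℕ} (u : Fin d → ℝ) :
    ∑ i, (shiftT u i) ^ 2 ≤ ∑ i, (u i) ^ 2 := by
  classical
  have h1 : ∑ i, (shiftT u i) ^ 2 =
      ∑ i ∈ Finset.univ.filter (fun i : Fin d => 0 < i.val ∧ i.val % 2 = 0),
        (shiftT u i) ^ 2 := by
    rw [Finset.sum_filter]
    apply Finset.sum_congr rfl
    intro i _
    by_cases h : 0 < i.val ∧ i.val % 2 = 0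
    · rw [if_pos h]
    · rw [if_neg h]; unfold shiftT; rw [dif_neg h]; ring
  rw [h1]
  set S := Finset.univ.filter (fun i : Fin d => 0 < i.val ∧ i.val % 2 = 0) with hS
  have key : ∑ i ∈ S, (shiftT u i) ^ 2 =
      ∑ j ∈ S.image (fun i : Fin d => (⟨i.val - 1, by omega⟩ : Fin d)), (u j) ^ 2 := by
    rw [Finset.sum_image]
    · apply Finset.sum_congr rfl
      intro i hi
      simp only [hS, Finset.mem_filter] at hi
      unfold shiftT
      rw [dif_pos hi.2]
    · intro a ha b hb hab
      simp only [Finset.mem_coe, hS, Finset.mem_filter] at ha hb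
      simp only [Fin.ext_iff, Fin.val_mk] at hab ⊢
      omega
  rw [key]
  apply Finset.sum_le_sum_of_subset_of_nonneg (Finset.subset_univ _)
  intro j _ _; positivity

lemma norm_mulVec_le {d : ℕ} (v : Fin d → ℝ) :
    ∑ i, ((lowerA1 d).mulVec v i) ^ 2 ≤ 9 * ∑ i, (v i) ^ 2 := by
  have step : ∑ i, ((lowerA1 d).mulVec v i) ^ 2 ≤
      ∑ i, (3 * (v i) ^ 2 + 6 * (shiftS v i) ^ 2) := by
    apply Finset.sum_le_sum
    intro i _
    rw [mulVec_lowerA1]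
    nlinarith [sq_nonneg (v i + shiftS v i)]
  calc ∑ i, ((lowerA1 d).mulVec v i) ^ 2 ≤ _ := step
    _ = 3 * ∑ i, (v i) ^ 2 + 6 * ∑ i, (shiftS v i) ^ 2 := by
        rw [Finset.sum_add_distrib, Finset.mul_sum, Finset.mul_sum]
    _ ≤ 3 * ∑ i, (v i) ^ 2 + 6 * ∑ i, (v i) ^ 2 := by
        have := shiftS_sq_le v; linarith
    _ = 9 * ∑ i, (v i) ^ 2 := by ring

lemma norm_mulVecT_le {d : ℕ} (u : Fin d → ℝ) :
    ∑ i, ((lowerA1 d).transpose.mulVec u i) ^ 2 ≤ 9 * ∑ i, (u i) ^ 2 := by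
  have step : ∑ i, ((lowerA1 d).transpose.mulVec u i) ^ 2 ≤
      ∑ i, (3 * (u i) ^ 2 + 6 * (shiftT u i) ^ 2) := by
    apply Finset.sum_le_sum
    intro i _
    rw [mulVec_lowerA1T]
    nlinarith [sq_nonneg (u i + shiftT u i)]
  calc ∑ i, ((lowerA1 d).transpose.mulVec u i) ^ 2 ≤ _ := step
    _ = 3 * ∑ i, (u i) ^ 2 + 6 * ∑ i, (shiftT u i) ^ 2 := by
        rw [Finset.sum_add_distrib, Finset.mul_sum, Finset.mul_sum]
    _ ≤ 3 * ∑ i, (u i) ^ 2 + 6 * ∑ i, (u i) ^ 2 := by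
        have := shiftT_sq_le u; linarith
    _ = 9 * ∑ i, (u i) ^ 2 := by ring

/-- `L`-smoothness (with `L = L̄/√n`) of the hard-instance local function `f₁`:
the map `(x,y) ↦ (∇ₓ f₁, ∇_y f₁)` is `L̄/√n`-Lipschitz. -/
theorem stmt_11 (d n : ℕ) (hd : 0 < d) (hn : 0 < n)
    (Lbar μ : ℝ) (hμ : 0 < μ) (hLμ : μ * Real.sqrt n ≤ Lbar)
    (c : ℝ) (hc : c = Lbar / (4 * Real.sqrt n))
    (Gx : (Fin d → ℝ) → (Fin d → ℝ) → (Fin d → ℝ))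
    (Gy : (Fin d → ℝ) → (Fin d → ℝ) → (Fin d → ℝ))
    (hGx : ∀ x y i, Gx x y i = c * (lowerA1 d).mulVec y i + (μ / 3) * x i)
    (hGy : ∀ x y i, Gy x y i = c * ((lowerA1 d).transpose.mulVec x) i - (μ / 3) * y i
        + (Lbar ^ 2 / (2 * n * μ)) * (if i.val = 0 then 1 else 0)) :
    ∀ x₁ x₂ y₁ y₂ : Fin d → ℝ,
      (∑ i, (Gx x₁ y₁ i - Gx x₂ y₂ i) ^ 2) + (∑ i, (Gy x₁ y₁ i - Gy x₂ y₂ i) ^ 2) ≤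
        (Lbar ^ 2 / n) * ((∑ i, (x₁ i - x₂ i) ^ 2) + (∑ i, (y₁ i - y₂ i) ^ 2)) := by
  intro x₁ x₂ y₁ y₂
  have hn' : (0 : ℝ) < n := by exact_mod_cast hn
  have hsp : 0 < Real.sqrt n := Real.sqrt_pos.mpr hn'
  have hs : Real.sqrt n ^ 2 = n := Real.sq_sqrt hn'.le
  set u : Fin d → ℝ := x₁ - x₂ with hu
  set v : Fin d → ℝ := y₁ - y₂ with hv
  set a : Fin d → ℝ := (lowerA1 d).mulVec v with ha
  set b : Fin d → ℝ := (lowerA1 d).transpose.mulVec u with hb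
  have hui : ∀ i, x₁ i - x₂ i = u i := fun i => rfl
  have hvi : ∀ i, y₁ i - y₂ i = v i := fun i => rfl
  have hGxd : ∀ i, Gx x₁ y₁ i - Gx x₂ y₂ i = c * a i + (μ / 3) * u i := by
    intro i
    simp only [hGx, ha, hu, hv, Matrix.mulVec_sub, Pi.sub_apply]
    ring
  have hGyd : ∀ i, Gy x₁ y₁ i - Gy x₂ y₂ i = c * b i + (-(μ / 3)) * v i := by
    intro i
    simp only [hGy, hb, hu, hv, Matrix.mulVec_sub, Pi.sub_apply]
    ring
  have expand : ∀ (w z : Fin d → ℝ) (s : ℝ),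
      ∑ i, (c * w i + s * z i) ^ 2 =
        c ^ 2 * (∑ i, (w i) ^ 2) + s ^ 2 * (∑ i, (z i) ^ 2) +
          (2 * c * s) * (∑ i, w i * z i) := by
    intro w z s
    rw [Finset.mul_sum, Finset.mul_sum, Finset.mul_sum, ← Finset.sum_add_distrib,
      ← Finset.sum_add_distrib]
    exact Finset.sum_congr rfl (fun i _ => by ring)
  have adj : ∑ i, a i * u i = ∑ i, b i * v i := by
    have h1 := Matrix.dotProduct_mulVec u (lowerA1 d) v
    rw [← Matrix.mulVec_transpose] at h1
    simp only [dotProduct] at h1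
    calc ∑ i, a i * u i = ∑ i, u i * (lowerA1 d).mulVec v i :=
          Finset.sum_congr rfl (fun i _ => mul_comm _ _)
      _ = ∑ i, (lowerA1 d).transpose.mulVec u i * v i := h1
      _ = ∑ i, b i * v i := rfl
  have e1 : ∑ i, (Gx x₁ y₁ i - Gx x₂ y₂ i) ^ 2 =
      c ^ 2 * (∑ i, (a i) ^ 2) + (μ / 3) ^ 2 * (∑ i, (u i) ^ 2) +
        (2 * c * (μ / 3)) * (∑ i, a i * u i) := by
    rw [Finset.sum_congr rfl (fun i _ => by rw [hGxd i]), expand a u (μ / 3)]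
  have e2 : ∑ i, (Gy x₁ y₁ i - Gy x₂ y₂ i) ^ 2 =
      c ^ 2 * (∑ i, (b i) ^ 2) + (μ / 3) ^ 2 * (∑ i, (v i) ^ 2) +
        (-(2 * c * (μ / 3))) * (∑ i, b i * v i) := by
    rw [Finset.sum_congr rfl (fun i _ => by rw [hGyd i]), expand b v (-(μ / 3))]
    ring
  have hSa : ∑ i, (a i) ^ 2 ≤ 9 * ∑ i, (v i) ^ 2 := norm_mulVec_le v
  have hSb : ∑ i, (b i) ^ 2 ≤ 9 * ∑ i, (u i) ^ 2 := norm_mulVecT_le u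
  have hc2 : c ^ 2 = Lbar ^ 2 / (16 * n) := by
    rw [hc, div_pow, mul_pow, hs]
    norm_num
  have hμ2n : μ ^ 2 * n ≤ Lbar ^ 2 := by
    nlinarith [mul_pos hμ hsp]
  have hμn : μ ^ 2 ≤ Lbar ^ 2 / n := (le_div_iff₀ hn').mpr hμ2n
  have hLn : 0 ≤ Lbar ^ 2 / n := by positivity
  have h9 : 9 * c ^ 2 + (μ / 3) ^ 2 ≤ Lbar ^ 2 / n := by
    rw [hc2]
    have h16 : 9 * (Lbar ^ 2 / (16 * n)) = (9 / 16) * (Lbar ^ 2 / n) := by ring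
    have hm : (μ / 3) ^ 2 = μ ^ 2 / 9 := by ring
    rw [h16, hm]
    linarith
  have hSu : 0 ≤ ∑ i, (u i) ^ 2 := Finset.sum_nonneg (fun i _ => sq_nonneg _)
  have hSv : 0 ≤ ∑ i, (v i) ^ 2 := Finset.sum_nonneg (fun i _ => sq_nonneg _)
  have goalr : (Lbar ^ 2 / n) * ((∑ i, (x₁ i - x₂ i) ^ 2) + (∑ i, (y₁ i - y₂ i) ^ 2)) =
      (Lbar ^ 2 / n) * ((∑ i, (u i) ^ 2) + (∑ i, (v i) ^ 2)) := rfl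
  rw [e1, e2, adj, goalr]
  have hcsq : 0 ≤ c ^ 2 := sq_nonneg c
  nlinarith [mul_le_mul_of_nonneg_left hSa hcsq, mul_le_mul_of_nonneg_left hSb hcsq,
    mul_le_mul_of_nonneg_right h9 (by linarith : (0:ℝ) ≤ (∑ i, (u i) ^ 2) + ∑ i, (v i) ^ 2)]
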